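/- Fix w with 1 ≤ w < x_V/x_U, and suppose U(x_U⁻) < ∞ and U(x_U⁻)·V(w·x_U) < 1. Let P = Σ_{n≥1} p_n X^n and V_w = Σ_{n≥0} b_n w^n X^n be the corresponding formal power series over ℝ, and define the sequence (Z_n(w))_{n≥0} by Σ_{n≥0} Z_n(w) X^n = V_w · (1 − P·V_w)⁻¹ as formal power series. Then the radius of convergence of Σ_{n≥0} Z_n(w) x^n, i.e. sup{r ≥ 0 : Σ_{n≥0} Z_n(w)·r^n converges}, equals x_U. -/

import Mathlib

open Filter Topology Set

private lemma sum_sum_antidiagonal_le (f g : ℕ → ℝ) (hf : ∀ i, 0 ≤ f i)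
    (hg : ∀ j, 0 ≤ g j) (N : ℕ) :
    ∑ n ∈ Finset.range N, ∑ pr ∈ Finset.HasAntidiagonal.antidiagonal n, f pr.1 * g pr.2 ≤
      (∑ i ∈ Finset.range N, f i) * (∑ j ∈ Finset.range N, g j) := by
  have hdisj : (↑(Finset.range N) : Set ℕ).PairwiseDisjoint
      (fun n => (Finset.HasAntidiagonal.antidiagonal n : Finset (ℕ × ℕ))) := by
    intro m _ n _ hmn
    refine Finset.disjoint_left.2 fun q hqm hqn => hmn ?_
    rw [Finset.HasAntidiagonal.mem_antidiagonal] at hqm hqn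
    omega
  rw [← Finset.sum_biUnion hdisj]
  have hsub : (Finset.range N).biUnion (fun n => Finset.HasAntidiagonal.antidiagonal n) ⊆
      Finset.range N ×ˢ Finset.range N := by
    intro q hq
    simp only [Finset.mem_biUnion, Finset.mem_range, Finset.HasAntidiagonal.mem_antidiagonal] at hq
    obtain ⟨n, hn, hqn⟩ := hq
    simp only [Finset.mem_product, Finset.mem_range]
    omega
  calc ∑ q ∈ (Finset.range N).biUnion (fun n => Finset.HasAntidiagonal.antidiagonal n), f q.1 * g q.2
      ≤ ∑ q ∈ Finset.range N ×ˢ Finset.range N, f q.1 * g q.2 :=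
        Finset.sum_le_sum_of_subset_of_nonneg hsub
          (fun q _ _ => mul_nonneg (hf _) (hg _))
    _ = _ := by rw [Finset.sum_mul_sum, ← Finset.sum_product']

/-- Fix w with 1 ≤ w < x_V/x_U, and suppose U(x_U⁻) < ∞ and
U(x_U⁻)·V(w·x_U) < 1.  Then the radius of convergence of the chain generating
function Z(x,w) = V_w·(1 − P·V_w)⁻¹ (as a formal power series) equals x_U. -/
theorem stmt_6
    (p b : ℕ → ℝ)
    (hp : ∀ n, 0 ≤ p n) (hp0 : p 0 = 0)
    (hb : ∀ n, 0 ≤ b n) (hb0 : 0 < b 0)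
    (hpN : ∃ N, 1 ≤ N ∧ 0 < p N) (hbM : ∃ M, 1 ≤ M ∧ 0 < b M)
    (U V : ℝ → ℝ)
    (hU : ∀ x, U x = ∑' n, p n * x ^ n)
    (hV : ∀ x, V x = ∑' n, b n * x ^ n)
    (xU xV : ℝ) (hxU0 : 0 < xU) (hxUV : xU < xV) (hxV1 : xV ≤ 1)
    (hUconv : ∀ x : ℝ, 0 ≤ x → x < xU → Summable fun n => p n * x ^ n)
    (hUdiv : ∀ x : ℝ, xU < x → ¬ Summable fun n => p n * x ^ n)
    (hVconv : ∀ x : ℝ, 0 ≤ x → x < xV → Summable fun n => b n * x ^ n)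
    (hVdiv : ∀ x : ℝ, xV < x → ¬ Summable fun n => b n * x ^ n)
    (hVinf : Filter.Tendsto V (𝓝[<] xV) Filter.atTop)
    (w : ℝ) (hw1 : 1 ≤ w) (hw2 : w < xV / xU)
    (L : ℝ) (hL : Filter.Tendsto U (𝓝[<] xU) (𝓝 L))
    (hsub : L * V (w * xU) < 1)
    (Z : PowerSeries ℝ)
    (hZ : Z = PowerSeries.mk (fun n => b n * w ^ n) *
      (1 - PowerSeries.mk p * PowerSeries.mk (fun n => b n * w ^ n))⁻¹) :
    sSup {r : ℝ | 0 ≤ r ∧ Summable fun n => PowerSeries.coeff (R := ℝ) n Z * r ^ n} = xU := by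
  have hw0 : (0:ℝ) ≤ w := le_trans zero_le_one hw1
  have hwxU : w * xU < xV := by
    rw [lt_div_iff₀ hxU0] at hw2; exact hw2
  have hwxU0 : 0 ≤ w * xU := mul_nonneg hw0 hxU0.le
  set Vw : PowerSeries ℝ := PowerSeries.mk (fun n => b n * w ^ n) with hVw
  set P : PowerSeries ℝ := PowerSeries.mk p with hP
  set Q : PowerSeries ℝ := P * Vw with hQdef
  -- coefficients of Q
  have hqcoeff : ∀ i, PowerSeries.coeff (R := ℝ) i Q =
      ∑ pr ∈ Finset.HasAntidiagonal.antidiagonal i, p pr.1 * (b pr.2 * w ^ pr.2) := by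
    intro i
    simp [hQdef, PowerSeries.coeff_mul, hP, hVw, PowerSeries.coeff_mk]
  have hq0 : PowerSeries.coeff (R := ℝ) 0 Q = 0 := by
    simp [hqcoeff, hp0]
  have hqnn : ∀ i, 0 ≤ PowerSeries.coeff (R := ℝ) i Q := fun i => by
    rw [hqcoeff]
    exact Finset.sum_nonneg fun pr _ =>
      mul_nonneg (hp _) (mul_nonneg (hb _) (pow_nonneg hw0 _))
  have hqlb : ∀ n, p n * b 0 ≤ PowerSeries.coeff (R := ℝ) n Q := by
    intro n
    rw [hqcoeff]
    have hmem : ((n, 0) : ℕ × ℕ) ∈ Finset.HasAntidiagonal.antidiagonal n := by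
      simp [Finset.HasAntidiagonal.mem_antidiagonal]
    have := Finset.single_le_sum (f := fun pr : ℕ × ℕ => p pr.1 * (b pr.2 * w ^ pr.2))
      (fun pr _ => mul_nonneg (hp _) (mul_nonneg (hb _) (pow_nonneg hw0 _))) hmem
    simpa using this
  -- recursion Z = Vw + Q * Z
  have hc : PowerSeries.constantCoeff (R := ℝ) (1 - Q) ≠ 0 := by
    have h0 : PowerSeries.constantCoeff (R := ℝ) Q = 0 := by
      simpa [PowerSeries.coeff_zero_eq_constantCoeff] using hq0
    simp [map_sub, h0]
  have hZQ : Z * (1 - Q) = Vw := by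
    rw [hZ, mul_assoc, PowerSeries.inv_mul_cancel _ hc, mul_one]
  have hrec : Z = Vw + Q * Z := by
    rw [← hZQ]; ring
  have hcoeff : ∀ n, PowerSeries.coeff (R := ℝ) n Z = b n * w ^ n +
      ∑ pr ∈ Finset.HasAntidiagonal.antidiagonal n,
        PowerSeries.coeff (R := ℝ) pr.1 Q * PowerSeries.coeff (R := ℝ) pr.2 Z := by
    intro n
    conv_lhs => rw [hrec]
    rw [map_add, PowerSeries.coeff_mul]
    simp [hVw, PowerSeries.coeff_mk]
  have ha0 : PowerSeries.coeff (R := ℝ) 0 Z = b 0 := by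
    have := hcoeff 0
    simpa [hq0] using this
  have hann : ∀ n, 0 ≤ PowerSeries.coeff (R := ℝ) n Z := by
    intro n
    induction n using Nat.strong_induction_on with
    | _ n ih =>
      rw [hcoeff n]
      refine add_nonneg (mul_nonneg (hb n) (pow_nonneg hw0 n))
        (Finset.sum_nonneg fun pr hpr => ?_)
      rw [Finset.HasAntidiagonal.mem_antidiagonal] at hpr
      rcases Nat.eq_zero_or_pos pr.1 with h1 | h1
      · simp [h1, hq0]
      · exact mul_nonneg (hqnn _) (ih pr.2 (by omega))
  have halb : ∀ n, p n * b 0 * b 0 ≤ PowerSeries.coeff (R := ℝ) n Z := by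
    intro n
    rw [hcoeff n]
    have hmem : ((n, 0) : ℕ × ℕ) ∈ Finset.HasAntidiagonal.antidiagonal n := by
      simp [Finset.HasAntidiagonal.mem_antidiagonal]
    have hnn : ∀ pr ∈ Finset.HasAntidiagonal.antidiagonal n,
        0 ≤ PowerSeries.coeff (R := ℝ) pr.1 Q * PowerSeries.coeff (R := ℝ) pr.2 Z :=
      fun pr _ => mul_nonneg (hqnn _) (hann _)
    have h1 := Finset.single_le_sum hnn hmem
    simp only at h1
    have h2 : p n * b 0 * b 0 ≤ PowerSeries.coeff (R := ℝ) n Q * PowerSeries.coeff (R := ℝ) 0 Z := by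
      rw [ha0]
      exact mul_le_mul_of_nonneg_right (hqlb n) hb0.le
    have h3 : 0 ≤ b n * w ^ n := mul_nonneg (hb n) (pow_nonneg hw0 n)
    linarith
  -- analytic bounds
  have hUleL : ∀ r, 0 ≤ r → r < xU → (∑' n, p n * r ^ n) ≤ L := by
    intro r hr0 hr
    have hev : ∀ᶠ x in 𝓝[<] xU, (∑' n, p n * r ^ n) ≤ U x := by
      filter_upwards [Ioo_mem_nhdsLT_of_mem ⟨hr, le_refl xU⟩] with x hx
      rw [hU x]
      exact Summable.tsum_le_tsum (fun n => mul_le_mul_of_nonneg_left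
        (pow_le_pow_left₀ hr0 hx.1.le n) (hp n))
        (hUconv r hr0 hr) (hUconv x (hr0.trans hx.1.le) hx.2)
    exact ge_of_tendsto hL hev
  have hL0 : 0 ≤ L :=
    le_trans (tsum_nonneg fun n => mul_nonneg (hp n) (pow_nonneg le_rfl n))
      (hUleL 0 le_rfl hxU0)
  have hVle : ∀ r, 0 ≤ r → r < xU → V (w * r) ≤ V (w * xU) := by
    intro r hr0 hr
    rw [hV, hV]
    exact Summable.tsum_le_tsum (fun n => mul_le_mul_of_nonneg_left
        (pow_le_pow_left₀ (mul_nonneg hw0 hr0) (by nlinarith) n) (hb n))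
      (hVconv _ (mul_nonneg hw0 hr0) (by nlinarith)) (hVconv _ hwxU0 hwxU)
  have hVnn : ∀ x, 0 ≤ x → 0 ≤ V x := by
    intro x hx
    rw [hV]
    exact tsum_nonneg fun n => mul_nonneg (hb n) (pow_nonneg hx n)
  -- convergence for r < xU
  have key : ∀ r, 0 ≤ r → r < xU →
      Summable (fun n => PowerSeries.coeff (R := ℝ) n Z * r ^ n) := by
    intro r hr0 hr
    have hwr0 : 0 ≤ w * r := mul_nonneg hw0 hr0
    have hwr : w * r < xV := lt_of_le_of_lt (by nlinarith) hwxU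
    have hsumb : Summable fun n => b n * (w * r) ^ n := hVconv _ hwr0 hwr
    have hsump : Summable fun n => p n * r ^ n := hUconv r hr0 hr
    have hfn : ∀ n, 0 ≤ p n * r ^ n := fun n => mul_nonneg (hp n) (pow_nonneg hr0 n)
    have hgn : ∀ n, 0 ≤ b n * (w * r) ^ n := fun n =>
      mul_nonneg (hb n) (pow_nonneg hwr0 n)
    have hqrn : ∀ j, 0 ≤ PowerSeries.coeff (R := ℝ) j Q * r ^ j := fun j =>
      mul_nonneg (hqnn j) (pow_nonneg hr0 j)
    have hQsum : ∀ N, ∑ j ∈ Finset.range N, PowerSeries.coeff (R := ℝ) j Q * r ^ j ≤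
        L * V (w * xU) := by
      intro N
      have h1 : ∀ j, PowerSeries.coeff (R := ℝ) j Q * r ^ j =
          ∑ pr ∈ Finset.HasAntidiagonal.antidiagonal j, (p pr.1 * r ^ pr.1) * (b pr.2 * (w * r) ^ pr.2) := by
        intro j
        rw [hqcoeff, Finset.sum_mul]
        refine Finset.sum_congr rfl fun pr hpr => ?_
        rw [Finset.HasAntidiagonal.mem_antidiagonal] at hpr
        rw [← hpr, pow_add, mul_pow]
        ring
      calc ∑ j ∈ Finset.range N, PowerSeries.coeff (R := ℝ) j Q * r ^ j
          = ∑ j ∈ Finset.range N, ∑ pr ∈ Finset.HasAntidiagonal.antidiagonal j,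
              (p pr.1 * r ^ pr.1) * (b pr.2 * (w * r) ^ pr.2) :=
            Finset.sum_congr rfl fun j _ => h1 j
        _ ≤ (∑ i ∈ Finset.range N, p i * r ^ i) *
              (∑ j ∈ Finset.range N, b j * (w * r) ^ j) :=
            sum_sum_antidiagonal_le _ _ hfn hgn N
        _ ≤ (∑' n, p n * r ^ n) * (∑' n, b n * (w * r) ^ n) :=
            mul_le_mul (Summable.sum_le_tsum _ (fun i _ => hfn i) hsump)
              (Summable.sum_le_tsum _ (fun i _ => hgn i) hsumb)
              (Finset.sum_nonneg fun i _ => hgn i)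
              (tsum_nonneg hfn)
        _ ≤ L * V (w * xU) := by
            have hv : (∑' n, b n * (w * r) ^ n) = V (w * r) := (hV _).symm
            rw [hv]
            exact mul_le_mul (hUleL r hr0 hr) (hVle r hr0 hr)
              (hVnn _ hwr0) hL0
    have hann' : ∀ n, 0 ≤ PowerSeries.coeff (R := ℝ) n Z * r ^ n := fun n =>
      mul_nonneg (hann n) (pow_nonneg hr0 n)
    have hq1 : 0 < 1 - L * V (w * xU) := by linarith
    have hbound : ∀ N, ∑ n ∈ Finset.range N, PowerSeries.coeff (R := ℝ) n Z * r ^ n ≤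
        V (w * r) / (1 - L * V (w * xU)) := by
      intro N
      set S := ∑ n ∈ Finset.range N, PowerSeries.coeff (R := ℝ) n Z * r ^ n with hS
      have hS0 : 0 ≤ S := Finset.sum_nonneg fun n _ => hann' n
      have hsplit : S = (∑ n ∈ Finset.range N, b n * (w * r) ^ n) +
          ∑ n ∈ Finset.range N, ∑ pr ∈ Finset.HasAntidiagonal.antidiagonal n,
            (PowerSeries.coeff (R := ℝ) pr.1 Q * r ^ pr.1) *
              (PowerSeries.coeff (R := ℝ) pr.2 Z * r ^ pr.2) := by
        rw [hS, ← Finset.sum_add_distrib]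
        refine Finset.sum_congr rfl fun n _ => ?_
        rw [hcoeff n, add_mul, Finset.sum_mul, mul_pow]
        congr 1
        · ring
        · refine Finset.sum_congr rfl fun pr hpr => ?_
          rw [Finset.HasAntidiagonal.mem_antidiagonal] at hpr
          rw [← hpr, pow_add]; ring
      have hB : (∑ n ∈ Finset.range N, b n * (w * r) ^ n) ≤ V (w * r) := by
        rw [hV]
        exact Summable.sum_le_tsum _ (fun i _ => hgn i) hsumb
      have hT : ∑ n ∈ Finset.range N, ∑ pr ∈ Finset.HasAntidiagonal.antidiagonal n,
            (PowerSeries.coeff (R := ℝ) pr.1 Q * r ^ pr.1) *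
              (PowerSeries.coeff (R := ℝ) pr.2 Z * r ^ pr.2) ≤ (L * V (w * xU)) * S := by
        calc _ ≤ (∑ i ∈ Finset.range N, PowerSeries.coeff (R := ℝ) i Q * r ^ i) * S :=
              sum_sum_antidiagonal_le _ _ hqrn hann' N
          _ ≤ (L * V (w * xU)) * S :=
              mul_le_mul_of_nonneg_right (hQsum N) hS0
      have hstep : S ≤ V (w * r) + (L * V (w * xU)) * S := by
        calc S = _ + _ := hsplit
          _ ≤ V (w * r) + L * V (w * xU) * S := add_le_add hB hT
      rw [le_div_iff₀ hq1]
      nlinarith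
    exact summable_of_sum_range_le hann' hbound
  -- upper bound: every element of the set is ≤ xU
  have hub : ∀ x ∈ {r : ℝ | 0 ≤ r ∧
      Summable fun n => PowerSeries.coeff (R := ℝ) n Z * r ^ n}, x ≤ xU := by
    rintro x ⟨hx0, hxs⟩
    by_contra hgt
    push_neg at hgt
    refine hUdiv x hgt ?_
    have hb2 : (0:ℝ) < b 0 * b 0 := mul_pos hb0 hb0
    have hs2 : Summable fun n => (b 0 * b 0)⁻¹ * (PowerSeries.coeff (R := ℝ) n Z * x ^ n) :=
      hxs.mul_left _
    refine Summable.of_nonneg_of_le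
      (fun n => mul_nonneg (hp n) (pow_nonneg hx0 n)) (fun n => ?_) hs2
    rw [inv_mul_eq_div, le_div_iff₀ hb2]
    calc p n * x ^ n * (b 0 * b 0) = (p n * b 0 * b 0) * x ^ n := by ring
      _ ≤ PowerSeries.coeff (R := ℝ) n Z * x ^ n :=
          mul_le_mul_of_nonneg_right (halb n) (pow_nonneg hx0 n)
  have hne : {r : ℝ | 0 ≤ r ∧
      Summable fun n => PowerSeries.coeff (R := ℝ) n Z * r ^ n}.Nonempty :=
    ⟨0, le_rfl, key 0 le_rfl hxU0⟩
  have hbdd : BddAbove {r : ℝ | 0 ≤ r ∧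
      Summable fun n => PowerSeries.coeff (R := ℝ) n Z * r ^ n} := ⟨xU, hub⟩
  apply le_antisymm
  · exact csSup_le hne hub
  · refine le_of_forall_lt fun y hy => ?_
    set r := max ((y + xU) / 2) 0 with hr
    have hr0 : 0 ≤ r := le_max_right _ _
    have hrxU : r < xU := max_lt (by linarith) hxU0
    have hrS : r ≤ sSup {r : ℝ | 0 ≤ r ∧
        Summable fun n => PowerSeries.coeff (R := ℝ) n Z * r ^ n} :=
      le_csSup hbdd ⟨hr0, key r hr0 hrxU⟩
    have hyr : y < r := lt_of_lt_of_le (by linarith) (le_max_left _ _)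
    linarith
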